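/- Let P = conv{(3,−2),(2,−2)} ⊆ ℝ^2 and Q = conv{(3,−2),(2,−2),(2,−1)} ⊆ ℝ^2, so P ⊆ Q are lattice polytopes (of dimensions 1 and 2), and let w(x) = (2x_1+3x_2)^2. Then h*_{P,w}(t) = 4t^2 + 4t and h*_{Q,w}(t) = t^2 + 5t; consequently h*_{P,w}(t) ⪯ h*_{Q,w}(t) fails coefficient-wise, and even h*_{P,w}(1) = 8 > 6 = h*_{Q,w}(1). Hence coefficient-wise and value-wise monotonicity of weighted h*-polynomials under inclusion can fail when the two polytopes have different dimensions. -/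

import Mathlib

open scoped Pointwise

noncomputable section

/-- The segment `P = conv{(3,−2),(2,−2)} ⊆ ℝ²`. -/
def segP : Set (Fin 2 → ℝ) := convexHull ℝ ({![3, -2], ![2, -2]} : Set (Fin 2 → ℝ))

/-- The triangle `Q = conv{(3,−2),(2,−2),(2,−1)} ⊆ ℝ²`. -/
def triQ : Set (Fin 2 → ℝ) :=
  convexHull ℝ ({![3, -2], ![2, -2], ![2, -1]} : Set (Fin 2 → ℝ))

/-! ### Auxiliary lemmas -/

lemma sum1 (m : ℕ) : ∑ j ∈ Finset.range m, (j : ℝ) = m * (m - 1) / 2 := by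
  induction m with
  | zero => simp
  | succ k ih => rw [Finset.sum_range_succ, ih]; push_cast; ring

lemma sum2 (m : ℕ) : ∑ j ∈ Finset.range m, (j : ℝ) ^ 2 = m * (m - 1) * (2 * m - 1) / 6 := by
  induction m with
  | zero => simp
  | succ k ih => rw [Finset.sum_range_succ, ih]; push_cast; ring

lemma sum3 (m : ℕ) : ∑ j ∈ Finset.range m, (j : ℝ) ^ 3 = (m * (m - 1)) ^ 2 / 4 := by
  induction m with
  | zero => simp
  | succ k ih => rw [Finset.sum_range_succ, ih]; push_cast; ring

lemma sumP' (n : ℕ) :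
    ∑ j ∈ Finset.range (n + 1), (2 * (j : ℝ) - 2 * n) ^ 2
      = 2 * (n:ℝ) * (n + 1) * (2 * n + 1) / 3 := by
  have he : ∀ j : ℕ, (2 * (j : ℝ) - 2 * n) ^ 2
      = 4 * (j:ℝ)^2 - (8 * (n:ℝ)) * (j:ℝ) + 4 * (n:ℝ)^2 := fun j => by ring
  simp only [he]
  rw [Finset.sum_add_distrib, Finset.sum_sub_distrib, ← Finset.mul_sum, ← Finset.mul_sum,
    Finset.sum_const, Finset.card_range, nsmul_eq_mul, sum1, sum2]
  push_cast
  ring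

lemma innerG (m : ℕ) :
    ∑ b ∈ Finset.range (m + 1), (3 * (b : ℝ) - 2 * m) ^ 2
      = (m:ℝ) * (m + 1) * (2 * m + 3) / 2 := by
  have he : ∀ b : ℕ, (3 * (b : ℝ) - 2 * m) ^ 2
      = 9 * (b:ℝ)^2 - (12 * (m:ℝ)) * (b:ℝ) + 4 * (m:ℝ)^2 := fun b => by ring
  simp only [he]
  rw [Finset.sum_add_distrib, Finset.sum_sub_distrib, ← Finset.mul_sum, ← Finset.mul_sum,
    Finset.sum_const, Finset.card_range, nsmul_eq_mul, sum1, sum2]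
  push_cast
  ring

lemma sumQ' (n : ℕ) :
    ∑ a ∈ Finset.range (n + 1), (a : ℝ) * (a + 1) * (2 * a + 3) / 2
      = (n:ℝ) * (n + 1) * (n + 2) * (3 * n + 7) / 12 := by
  have he : ∀ a : ℕ, (a : ℝ) * (a + 1) * (2 * a + 3) / 2
      = (a:ℝ)^3 + (5/2 : ℝ) * (a:ℝ)^2 + (3/2 : ℝ) * (a:ℝ) := fun a => by ring
  simp only [he]
  rw [Finset.sum_add_distrib, Finset.sum_add_distrib, ← Finset.mul_sum, ← Finset.mul_sum,
    sum1, sum2, sum3]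
  push_cast
  ring

lemma step (g : ℕ → ℝ) (h0 : g 0 = 0) :
    PowerSeries.mk g * (1 - PowerSeries.X) = PowerSeries.mk (fun n => g n - g (n - 1)) := by
  ext n
  rw [mul_sub, mul_one]
  cases n with
  | zero => simp [h0]
  | succ k => simp [PowerSeries.coeff_succ_mul_X]

def fP : ℕ → ℝ := fun n => 2 * n * (n + 1) * (2 * n + 1) / 3

def fQ : ℕ → ℝ := fun n => n * (n + 1) * (n + 2) * (3 * n + 7) / 12

lemma psP : PowerSeries.mk fP * (1 - PowerSeries.X) ^ 4
    = ((Polynomial.C (4 : ℝ) * Polynomial.X ^ 2 + Polynomial.C 4 * Polynomial.X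
        : Polynomial ℝ) : PowerSeries ℝ) := by
  rw [show (4:ℕ) = 3 + 1 from rfl, pow_succ, ← mul_assoc,
      show (1 - PowerSeries.X : PowerSeries ℝ) ^ 3 = (1 - PowerSeries.X) ^ 2 * (1 - PowerSeries.X) from pow_succ _ 2, ← mul_assoc,
      pow_two, ← mul_assoc,
      step fP (by simp [fP]), step _ (by simp), step _ (by simp), step _ (by simp)]
  ext n
  rw [PowerSeries.coeff_mk, Polynomial.coeff_coe]
  match n with
  | 0 => norm_num [fP]
  | 1 => norm_num [fP, Polynomial.coeff_one]
  | 2 => norm_num [fP, Polynomial.coeff_one]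
  | 3 => norm_num [fP, Polynomial.coeff_one, Polynomial.coeff_X]
  | (k+4) =>
    have h1 : (k+4) - 1 = k+3 := rfl
    have h2 : (k+3) - 1 = k+2 := rfl
    have h3 : (k+2) - 1 = k+1 := rfl
    have h4 : (k+1) - 1 = k := rfl
    rw [h1, h2, h3, h4]
    have hc : (Polynomial.C (4 : ℝ) * Polynomial.X ^ 2 + Polynomial.C 4 * Polynomial.X
        : Polynomial ℝ).coeff (k+4) = 0 := by
      rw [Polynomial.coeff_add, Polynomial.coeff_C_mul, Polynomial.coeff_C_mul,
        Polynomial.coeff_X_pow, Polynomial.coeff_X]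
      rw [if_neg (by omega), if_neg (by omega)]
      ring
    rw [hc]
    simp only [fP]
    push_cast
    ring

lemma psQ : PowerSeries.mk fQ * (1 - PowerSeries.X) ^ 5
    = ((Polynomial.X ^ 2 + Polynomial.C (5 : ℝ) * Polynomial.X : Polynomial ℝ)
        : PowerSeries ℝ) := by
  have hpow : (1 - PowerSeries.X : PowerSeries ℝ) ^ 5
      = (1 - PowerSeries.X) * (1 - PowerSeries.X) * (1 - PowerSeries.X) * (1 - PowerSeries.X)
        * (1 - PowerSeries.X) := by ring
  rw [hpow, ← mul_assoc, ← mul_assoc, ← mul_assoc, ← mul_assoc,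
      step fQ (by simp [fQ]), step _ (by simp), step _ (by simp), step _ (by simp),
      step _ (by simp)]
  ext n
  rw [PowerSeries.coeff_mk, Polynomial.coeff_coe]
  match n with
  | 0 => norm_num [fQ]
  | 1 => norm_num [fQ, Polynomial.coeff_one]
  | 2 => norm_num [fQ, Polynomial.coeff_one]
  | 3 => norm_num [fQ, Polynomial.coeff_one, Polynomial.coeff_X]
  | 4 => norm_num [fQ, Polynomial.coeff_one, Polynomial.coeff_X]
  | (k+5) =>
    have h1 : (k+5) - 1 = k+4 := rfl
    have h2 : (k+4) - 1 = k+3 := rfl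
    have h3 : (k+3) - 1 = k+2 := rfl
    have h4 : (k+2) - 1 = k+1 := rfl
    have h5 : (k+1) - 1 = k := rfl
    rw [h1, h2, h3, h4, h5]
    have hc : (Polynomial.X ^ 2 + Polynomial.C (5 : ℝ) * Polynomial.X
        : Polynomial ℝ).coeff (k+5) = 0 := by
      rw [Polynomial.coeff_add, Polynomial.coeff_C_mul,
        Polynomial.coeff_X_pow, Polynomial.coeff_X]
      rw [if_neg (by omega), if_neg (by omega)]
      ring
    rw [hc]
    simp only [fQ]
    push_cast
    ring

lemma smulvec (c x y : ℝ) : c • (![x, y] : Fin 2 → ℝ) = ![c * x, c * y] := by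
  funext i; fin_cases i <;> simp

lemma memP (n : ℕ) (v : Fin 2 → ℝ) :
    v ∈ (n : ℝ) • segP ↔ v 1 = -(2 * n) ∧ 2 * n ≤ v 0 ∧ v 0 ≤ 3 * n := by
  have hn0 : (0:ℝ) ≤ n := Nat.cast_nonneg n
  rw [segP, ← convexHull_smul, Set.smul_set_insert, Set.smul_set_singleton,
    convexHull_pair, smulvec, smulvec]
  constructor
  · rintro ⟨s, t, hs, ht, hst, rfl⟩
    refine ⟨by simp; ring_nf; nlinarith, ?_, ?_⟩ <;> simp <;> nlinarith
  · rintro ⟨h1, h2, h3⟩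
    by_cases hn : (n:ℝ) = 0
    · refine ⟨1, 0, zero_le_one, le_refl 0, by norm_num, ?_⟩
      funext i; fin_cases i <;> simp [hn] <;> [skip; skip] <;> linarith [h2, h3, h1]
    · have hp : (0:ℝ) < n := lt_of_le_of_ne hn0 (Ne.symm hn)
      refine ⟨(v 0 - 2 * n) / n, (3 * n - v 0) / n,
        div_nonneg (by linarith) hn0, div_nonneg (by linarith) hn0,
        by field_simp; ring, ?_⟩
      funext i
      fin_cases i
      · simp; field_simp; ring
      · simp; field_simp; rw [h1]; ring

lemma memQ (n : ℕ) (v : Fin 2 → ℝ) :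
    v ∈ (n : ℝ) • triQ ↔ 2 * n ≤ v 0 ∧ -(2 * n) ≤ v 1 ∧ v 0 + v 1 ≤ n := by
  have hn0 : (0:ℝ) ≤ n := Nat.cast_nonneg n
  rw [triQ, ← convexHull_smul, Set.smul_set_insert, Set.smul_set_insert,
    Set.smul_set_singleton, smulvec, smulvec, smulvec]
  set A : Fin 2 → ℝ := ![(n:ℝ) * 3, (n:ℝ) * -2] with hA
  set B : Fin 2 → ℝ := ![(n:ℝ) * 2, (n:ℝ) * -2] with hB
  set C : Fin 2 → ℝ := ![(n:ℝ) * 2, (n:ℝ) * -1] with hC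
  constructor
  · intro hv
    have hsub : convexHull ℝ ({A, B, C} : Set (Fin 2 → ℝ))
        ⊆ {w : Fin 2 → ℝ | 2 * n ≤ w 0 ∧ -(2 * n) ≤ w 1 ∧ w 0 + w 1 ≤ n} := by
      apply convexHull_min
      · rintro w (rfl | rfl | rfl) <;> refine ⟨?_, ?_, ?_⟩ <;>
          simp [hA, hB, hC] <;> try linarith
      · rintro x ⟨hx1, hx2, hx3⟩ y ⟨hy1, hy2, hy3⟩ s t hs ht hst
        refine ⟨?_, ?_, ?_⟩ <;> simp <;> nlinarith
    exact hsub hv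
  · rintro ⟨h1, h2, h3⟩
    by_cases hn : (n:ℝ) = 0
    · have hv : v = A := by
        funext i; fin_cases i <;> simp [hA, hn] <;> linarith
      rw [hv]
      exact subset_convexHull ℝ _ (Set.mem_insert _ _)
    · have hp : (0:ℝ) < n := lt_of_le_of_ne hn0 (Ne.symm hn)
      set w : Fin 3 → ℝ := ![(v 0 - 2 * n) / n, (n - v 0 - v 1) / n, (v 1 + 2 * n) / n] with hw
      have hsum : ∑ i : Fin 3, w i = 1 := by
        rw [hw, Fin.sum_univ_three]; simp; field_simp; ring
      have key := Finset.centerMass_mem_convexHull (Finset.univ : Finset (Fin 3))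
        (w := w) (z := ![A, B, C]) (s := ({A, B, C} : Set (Fin 2 → ℝ)))
        ?_ (by rw [hsum]; norm_num) ?_
      · have hcm : Finset.univ.centerMass w ![A, B, C] = v := by
          rw [Finset.centerMass_eq_of_sum_1 _ _ hsum, Fin.sum_univ_three]
          funext i
          fin_cases i <;> simp [hw, hA, hB, hC] <;> field_simp <;> ring
        rwa [hcm] at key
      · intro i _
        fin_cases i <;> simp [hw]
        · exact div_nonneg (by linarith) hn0
        · exact div_nonneg (by linarith) hn0
        · exact div_nonneg (by linarith) hn0
      · intro i _
        fin_cases i <;> simp [Set.mem_insert_iff]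

lemma sumP (n : ℕ) :
    ∑ᶠ x ∈ {x : Fin 2 → ℤ | (fun i => ((x i : ℝ))) ∈ (n : ℝ) • segP},
      (2 * (x 0 : ℝ) + 3 * (x 1 : ℝ)) ^ 2 = 2 * (n:ℝ) * (n + 1) * (2 * n + 1) / 3 := by
  have hset : {x : Fin 2 → ℤ | (fun i => ((x i : ℝ))) ∈ (n : ℝ) • segP}
      = ↑((Finset.range (n+1)).image fun (j : ℕ) =>
          (![(j:ℤ) + 2*n, -(2*(n:ℤ))] : Fin 2 → ℤ)) := by
    ext x
    simp only [Set.mem_setOf_eq, Finset.coe_image, Set.mem_image, Finset.mem_coe,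
      Finset.mem_range, memP]
    constructor
    · rintro ⟨h1, h2, h3⟩
      have h1' : x 1 = -(2*(n:ℤ)) := by exact_mod_cast h1
      have h2' : 2*(n:ℤ) ≤ x 0 := by exact_mod_cast h2
      have h3' : x 0 ≤ 3*(n:ℤ) := by exact_mod_cast h3
      refine ⟨(x 0 - 2*n).toNat, by omega, ?_⟩
      funext i; fin_cases i <;> simp <;> omega
    · rintro ⟨j, hj, rfl⟩
      have hjn : (j:ℝ) ≤ n := by exact_mod_cast Nat.lt_succ_iff.mp hj
      refine ⟨?_, ?_, ?_⟩ <;> simp <;> push_cast <;> linarith [Nat.cast_nonneg (α := ℝ) j]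
  rw [hset, finsum_mem_coe_finset]
  rw [Finset.sum_image (fun a _ b _ h => by
    have := congrFun h 0
    simp only [Matrix.cons_val_zero, add_left_inj, Nat.cast_inj] at this
    exact this)]
  trans (∑ j ∈ Finset.range (n+1), (2*(j:ℝ) - 2*n)^2)
  · apply Finset.sum_congr rfl
    intro j _
    simp only [Matrix.cons_val_zero, Matrix.cons_val_one, Matrix.head_cons]
    push_cast
    ring
  · exact sumP' n

lemma sumQ (n : ℕ) :
    ∑ᶠ x ∈ {x : Fin 2 → ℤ | (fun i => ((x i : ℝ))) ∈ (n : ℝ) • triQ},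
      (2 * (x 0 : ℝ) + 3 * (x 1 : ℝ)) ^ 2
      = (n:ℝ) * (n + 1) * (n + 2) * (3 * n + 7) / 12 := by
  have hset : {x : Fin 2 → ℤ | (fun i => ((x i : ℝ))) ∈ (n : ℝ) • triQ}
      = ↑((Finset.range (n+1)).biUnion fun (a : ℕ) =>
          (Finset.range (n - a + 1)).image fun (b : ℕ) =>
            (![(a:ℤ) + 2*n, (b:ℤ) - 2*n] : Fin 2 → ℤ)) := by
    ext x
    simp only [Set.mem_setOf_eq, Finset.coe_biUnion, Set.mem_iUnion, Finset.mem_coe,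
      Finset.mem_biUnion, Finset.mem_image, Finset.mem_range, memQ]
    constructor
    · rintro ⟨h1, h2, h3⟩
      have h1' : 2*(n:ℤ) ≤ x 0 := by exact_mod_cast h1
      have h2' : -(2*(n:ℤ)) ≤ x 1 := by exact_mod_cast h2
      have h3' : x 0 + x 1 ≤ (n:ℤ) := by exact_mod_cast h3
      refine ⟨(x 0 - 2*n).toNat, by omega, (x 1 + 2*n).toNat, by omega, ?_⟩
      funext i; fin_cases i <;> simp <;> omega
    · rintro ⟨a, ha, b, hb, rfl⟩
      have hab : a + b ≤ n := by omega
      have hab' : (a:ℝ) + (b:ℝ) ≤ n := by exact_mod_cast hab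
      refine ⟨?_, ?_, ?_⟩
      · simp
      · simp
      · simp; push_cast; linarith
  rw [hset, finsum_mem_coe_finset]
  rw [Finset.sum_biUnion ?disj]
  case disj =>
    intro a _ a' _ hne
    simp only [Finset.disjoint_left, Finset.mem_image, Finset.mem_range]
    rintro x ⟨b, hb, rfl⟩ ⟨b', hb', hEq⟩
    have := congrFun hEq 0
    simp only [Matrix.cons_val_zero, add_left_inj, Nat.cast_inj] at this
    exact hne this.symm
  trans (∑ a ∈ Finset.range (n+1), ((n-a : ℕ):ℝ) * ((n-a : ℕ) + 1) * (2 * (n-a : ℕ) + 3) / 2)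
  · apply Finset.sum_congr rfl
    intro a ha
    have han : a ≤ n := Nat.lt_succ_iff.mp (Finset.mem_range.mp ha)
    rw [Finset.sum_image (fun b _ b' _ h => by
      have := congrFun h 1
      simp only [Matrix.cons_val_one, Matrix.head_cons, Matrix.cons_val_zero, sub_left_inj, Nat.cast_inj] at this
      exact this)]
    trans (∑ b ∈ Finset.range ((n-a) + 1), (3*(b:ℝ) - 2*((n-a : ℕ):ℝ))^2)
    · apply Finset.sum_congr rfl
      intro b _
      simp only [Matrix.cons_val_zero, Matrix.cons_val_one, Matrix.head_cons]
      rw [Nat.cast_sub han]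
      push_cast
      ring
    · exact innerG (n - a)
  · have hrefl := Finset.sum_range_reflect
      (fun a => ((a : ℕ):ℝ) * ((a : ℕ) + 1) * (2 * (a : ℕ) + 3) / 2) (n+1)
    simp only [Nat.add_sub_cancel] at hrefl
    rw [hrefl]
    exact sumQ' n

/-- For the lattice polytopes `P = conv{(3,−2),(2,−2)} ⊆ Q =
conv{(3,−2),(2,−2),(2,−1)}` (of dimensions 1 and 2) and the weight `w(x) = (2x₁+3x₂)²`, one has
`h*_{P,w}(t) = 4t² + 4t` and `h*_{Q,w}(t) = t² + 5t` (the `h*`-polynomials being defined by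
`Σ_{n≥0}(Σ_{x∈nP∩ℤ²} w(x)) tⁿ = h*_{P,w}(t)/(1−t)^{1+2+1}` and similarly for `Q` with
`(1−t)^{2+2+1}`); consequently coefficient-wise monotonicity `h*_{P,w} ⪯ h*_{Q,w}` fails, and
even `h*_{Q,w}(1) = 6 < 8 = h*_{P,w}(1)`. -/
theorem monotonicity_fails_different_dimensions :
    (PowerSeries.mk fun n =>
        ∑ᶠ x ∈ {x : Fin 2 → ℤ | (fun i => ((x i : ℝ))) ∈ (n : ℝ) • segP},
          (2 * (x 0 : ℝ) + 3 * (x 1 : ℝ)) ^ 2)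
        * (1 - PowerSeries.X) ^ 4
      = ((Polynomial.C (4 : ℝ) * Polynomial.X ^ 2 + Polynomial.C 4 * Polynomial.X
          : Polynomial ℝ) : PowerSeries ℝ) ∧
    (PowerSeries.mk fun n =>
        ∑ᶠ x ∈ {x : Fin 2 → ℤ | (fun i => ((x i : ℝ))) ∈ (n : ℝ) • triQ},
          (2 * (x 0 : ℝ) + 3 * (x 1 : ℝ)) ^ 2)
        * (1 - PowerSeries.X) ^ 5
      = ((Polynomial.X ^ 2 + Polynomial.C (5 : ℝ) * Polynomial.X : Polynomial ℝ)
        : PowerSeries ℝ) ∧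
    ¬ (∀ n, (Polynomial.C (4 : ℝ) * Polynomial.X ^ 2 + Polynomial.C 4 * Polynomial.X
          : Polynomial ℝ).coeff n
        ≤ (Polynomial.X ^ 2 + Polynomial.C (5 : ℝ) * Polynomial.X : Polynomial ℝ).coeff n) ∧
    Polynomial.eval (1 : ℝ)
        (Polynomial.X ^ 2 + Polynomial.C (5 : ℝ) * Polynomial.X : Polynomial ℝ)
      < Polynomial.eval (1 : ℝ)
        (Polynomial.C (4 : ℝ) * Polynomial.X ^ 2 + Polynomial.C 4 * Polynomial.X
          : Polynomial ℝ) := by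
  refine ⟨?_, ?_, ?_, ?_⟩
  · have h1 : (PowerSeries.mk fun n =>
        ∑ᶠ x ∈ {x : Fin 2 → ℤ | (fun i => ((x i : ℝ))) ∈ (n : ℝ) • segP},
          (2 * (x 0 : ℝ) + 3 * (x 1 : ℝ)) ^ 2) = PowerSeries.mk fP :=
      congrArg PowerSeries.mk (funext sumP)
    rw [h1]
    exact psP
  · have h2 : (PowerSeries.mk fun n =>
        ∑ᶠ x ∈ {x : Fin 2 → ℤ | (fun i => ((x i : ℝ))) ∈ (n : ℝ) • triQ},
          (2 * (x 0 : ℝ) + 3 * (x 1 : ℝ)) ^ 2) = PowerSeries.mk fQ :=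
      congrArg PowerSeries.mk (funext sumQ)
    rw [h2]
    exact psQ
  · intro h
    have := h 2
    simp [Polynomial.coeff_X, Polynomial.coeff_one] at this
  · simp; norm_num
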